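/- Outer nose retraction, equal case: for positive integers α₁ = αₙ and n ≥ 3, Z(α₁, α₂, ..., α_{n-1}, αₙ) = Z(α₂, ..., α_{n-1}) + α₁. -/

import Mathlib

/-- Upper-arc partner of point `k ∈ {1,…,2·sum}` in a meander whose upper arcs
form consecutive rainbow families of the given sizes (1-indexed points). -/
def upperPartner : List ℕ → ℕ → ℕ
  | [], k => k
  | a :: rest, k => if k ≤ 2 * a then 2 * a + 1 - k else 2 * a + upperPartner rest (k - 2 * a)

/-- One step along the bi-rainbow meander: upper or lower partner. -/
def meanderRel (l : List ℕ) (x y : ℕ) : Prop :=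
  y = upperPartner l x ∨ y = 2 * l.sum + 1 - x

/-- Connectivity relation on the points `{1,…,2α}` of the bi-rainbow meander `RM l`. -/
def meanderSetoid (l : List ℕ) : Setoid {k : ℕ // 1 ≤ k ∧ k ≤ 2 * l.sum} :=
  ⟨fun a b => Relation.EqvGen (fun a b => meanderRel l a.1 b.1) a b,
    Relation.EqvGen.is_equivalence _⟩

/-- Number of connected components (Jordan curves) of the bi-rainbow meander `RM l`. -/
noncomputable def Z (l : List ℕ) : ℕ := Nat.card (Quotient (meanderSetoid l))

namespace OuterRetract

lemma up_left (l l' : List ℕ) (j : ℕ) (h1 : 1 ≤ j) (h2 : j ≤ 2 * l.sum) :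
    upperPartner (l ++ l') j = upperPartner l j := by
  induction l generalizing j with
  | nil => simp at h2; omega
  | cons b rest ih =>
    simp only [List.cons_append, upperPartner, List.append_eq]
    by_cases h : j ≤ 2 * b
    · simp [h]
    · simp only [if_neg h]
      rw [ih (j - 2 * b) (by omega) (by simp [List.sum_cons] at h2 ⊢; omega)]

lemma up_right (l l' : List ℕ) (j : ℕ) (h : 2 * l.sum < j) :
    upperPartner (l ++ l') j = 2 * l.sum + upperPartner l' (j - 2 * l.sum) := by
  induction l generalizing j with
  | nil => simp
  | cons b rest ih =>
    have hb : ¬ j ≤ 2 * b := by simp [List.sum_cons] at h; omega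
    simp only [List.cons_append, upperPartner, if_neg hb, List.append_eq]
    rw [ih (j - 2 * b) (by simp [List.sum_cons] at h; omega)]
    have e1 : j - 2 * b - 2 * rest.sum = j - 2 * (b :: rest).sum := by
      simp [List.sum_cons]; omega
    rw [e1]
    simp [List.sum_cons]; omega

lemma up_bounds (l : List ℕ) (j : ℕ) (h1 : 1 ≤ j) (h2 : j ≤ 2 * l.sum) :
    1 ≤ upperPartner l j ∧ upperPartner l j ≤ 2 * l.sum := by
  induction l generalizing j with
  | nil => simp at h2; omega
  | cons b rest ih =>
    simp only [upperPartner]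
    by_cases h : j ≤ 2 * b
    · simp only [if_pos h, List.sum_cons]; omega
    · simp only [if_neg h, List.sum_cons]
      have := ih (j - 2 * b) (by omega) (by simp [List.sum_cons] at h2; omega)
      omega

/-- cycle index of a region-A point -/
def idx (a s x : ℕ) : ℕ :=
  if x ≤ a then x
  else if x ≤ 2 * a then 2 * a + 1 - x
  else if x ≤ 3 * a + 2 * s then x - (2 * a + 2 * s)
  else 4 * a + 2 * s + 1 - x

section Main

variable (a : ℕ) (mid : List ℕ)

lemma sumL : ((a :: mid ++ [a]) : List ℕ).sum = 2 * a + mid.sum := by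
  simp [List.sum_append]; omega

/-- classification of a point of the big meander -/
noncomputable def f (x : {k : ℕ // 1 ≤ k ∧ k ≤ 2 * ((a :: mid ++ [a]) : List ℕ).sum}) :
    Quotient (meanderSetoid mid) ⊕ Fin a :=
  if h : 2 * a < x.1 ∧ x.1 ≤ 2 * a + 2 * mid.sum then
    Sum.inl (Quotient.mk (meanderSetoid mid) ⟨x.1 - 2 * a, by omega⟩)
  else
    Sum.inr ⟨idx a mid.sum x.1 - 1, by
      have hx := x.2
      have hsum := sumL a mid
      unfold idx
      split_ifs <;> omega⟩

lemma uL1 (k : ℕ) (h2 : k ≤ 2 * a) :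
    upperPartner (a :: mid ++ [a]) k = 2 * a + 1 - k := by
  simp only [List.cons_append, upperPartner, if_pos h2]

lemma uL2 (k : ℕ) (h1 : 2 * a < k) (h2 : k ≤ 2 * a + 2 * mid.sum) :
    upperPartner (a :: mid ++ [a]) k = 2 * a + upperPartner mid (k - 2 * a) := by
  simp only [List.cons_append, upperPartner, if_neg (by omega : ¬ k ≤ 2 * a), List.append_eq]
  rw [up_left mid [a] (k - 2 * a) (by omega) (by omega)]

lemma uL3 (k : ℕ) (h1 : 2 * a + 2 * mid.sum < k) (h2 : k ≤ 4 * a + 2 * mid.sum) :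
    upperPartner (a :: mid ++ [a]) k = 6 * a + 4 * mid.sum + 1 - k := by
  simp only [List.cons_append, upperPartner, if_neg (by omega : ¬ k ≤ 2 * a), List.append_eq]
  rw [up_right mid [a] (k - 2 * a) (by omega)]
  simp only [upperPartner]
  rw [if_pos (by omega : k - 2 * a - 2 * mid.sum ≤ 2 * a)]
  omega

lemma f_eq_A (x y : {k : ℕ // 1 ≤ k ∧ k ≤ 2 * ((a :: mid ++ [a]) : List ℕ).sum})
    (hx : ¬ (2 * a < x.1 ∧ x.1 ≤ 2 * a + 2 * mid.sum))
    (hy : ¬ (2 * a < y.1 ∧ y.1 ≤ 2 * a + 2 * mid.sum))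
    (hidx : idx a mid.sum x.1 = idx a mid.sum y.1) : f a mid x = f a mid y := by
  unfold f
  rw [dif_neg hx, dif_neg hy]
  exact congrArg Sum.inr (Fin.ext (by simp [hidx]))

lemma f_eq_B (x y : {k : ℕ // 1 ≤ k ∧ k ≤ 2 * ((a :: mid ++ [a]) : List ℕ).sum})
    (hx : 2 * a < x.1 ∧ x.1 ≤ 2 * a + 2 * mid.sum)
    (hy : 2 * a < y.1 ∧ y.1 ≤ 2 * a + 2 * mid.sum)
    (hrel : meanderRel mid (x.1 - 2 * a) (y.1 - 2 * a)) : f a mid x = f a mid y := by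
  unfold f
  rw [dif_pos hx, dif_pos hy]
  exact congrArg Sum.inl (Quotient.sound (Relation.EqvGen.rel _ _ hrel))

lemma f_rel (x y : {k : ℕ // 1 ≤ k ∧ k ≤ 2 * ((a :: mid ++ [a]) : List ℕ).sum})
    (h : meanderRel (a :: mid ++ [a]) x.1 y.1) : f a mid x = f a mid y := by
  have hx := x.2
  have hy := y.2
  have hsum := sumL a mid
  rcases h with hu | hl
  · -- upper partner
    rcases lt_or_ge (2 * a) x.1 with h1 | h1
    · rcases le_or_gt x.1 (2 * a + 2 * mid.sum) with h2 | h2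
      · -- region B
        rw [uL2 a mid x.1 h1 h2] at hu
        have hb := up_bounds mid (x.1 - 2 * a) (by omega) (by omega)
        refine f_eq_B a mid x y ⟨h1, h2⟩ (by omega) (Or.inl (by omega))
      · -- region A, right part
        rw [uL3 a mid x.1 h2 (by omega)] at hu
        refine f_eq_A a mid x y (by omega) (by omega) ?_
        unfold idx; split_ifs <;> omega
    · -- region A, left part
      rw [uL1 a mid x.1 h1] at hu
      refine f_eq_A a mid x y (by omega) (by omega) ?_
      unfold idx; split_ifs <;> omega
  · -- lower partner
    rcases lt_or_ge (2 * a) x.1 with h1 | h1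
    · rcases le_or_gt x.1 (2 * a + 2 * mid.sum) with h2 | h2
      · refine f_eq_B a mid x y ⟨h1, h2⟩ (by omega) (Or.inr (by omega))
      · refine f_eq_A a mid x y (by omega) (by omega) ?_
        unfold idx; split_ifs <;> omega
    · refine f_eq_A a mid x y (by omega) (by omega) ?_
      unfold idx; split_ifs <;> omega

/-- connect any region-A point to a canonical point with value `idx` -/
lemma conn_A (x : {k : ℕ // 1 ≤ k ∧ k ≤ 2 * ((a :: mid ++ [a]) : List ℕ).sum})
    (hA : ¬ (2 * a < x.1 ∧ x.1 ≤ 2 * a + 2 * mid.sum))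
    (c : {k : ℕ // 1 ≤ k ∧ k ≤ 2 * ((a :: mid ++ [a]) : List ℕ).sum})
    (hc : c.1 = idx a mid.sum x.1) :
    Relation.EqvGen (fun p q : {k : ℕ // 1 ≤ k ∧ k ≤ 2 * ((a :: mid ++ [a]) : List ℕ).sum} =>
      meanderRel (a :: mid ++ [a]) p.1 q.1) x c := by
  have hx := x.2
  have hsum := sumL a mid
  set s := mid.sum with hs
  set i := idx a s x.1 with hi
  have hiv : (x.1 ≤ a ∧ i = x.1) ∨ (a < x.1 ∧ x.1 ≤ 2 * a ∧ i = 2 * a + 1 - x.1)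
      ∨ (2 * a + 2 * s < x.1 ∧ x.1 ≤ 3 * a + 2 * s ∧ i = x.1 - (2 * a + 2 * s))
      ∨ (3 * a + 2 * s < x.1 ∧ i = 4 * a + 2 * s + 1 - x.1) := by
    rw [hi]; unfold idx; split_ifs <;> omega
  rcases hiv with ⟨h1, h2⟩ | ⟨h1, h2, h3⟩ | ⟨h1, h2, h3⟩ | ⟨h1, h2⟩
  · have : x = c := Subtype.ext (by omega)
    rw [this]
    exact Relation.EqvGen.refl c
  · exact Relation.EqvGen.rel _ _ (Or.inl (by rw [uL1 a mid x.1 h2]; omega))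
  · refine Relation.EqvGen.trans _ ⟨4 * a + 2 * s + 1 - i, by omega⟩ _
      (Relation.EqvGen.rel _ _ (Or.inl (by
        rw [uL3 a mid x.1 h1 (by omega)]
        show 4 * a + 2 * s + 1 - i = _
        omega)))
      (Relation.EqvGen.rel _ _ (Or.inr (by
        show c.1 = 2 * ((a :: mid ++ [a]) : List ℕ).sum + 1 - (4 * a + 2 * s + 1 - i)
        omega)))
  · exact Relation.EqvGen.rel _ _ (Or.inr (by omega))

/-- lift a mid-connection to the big meander -/
lemma lift_B (p q : {k : ℕ // 1 ≤ k ∧ k ≤ 2 * mid.sum})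
    (h : Relation.EqvGen (fun p q : {k : ℕ // 1 ≤ k ∧ k ≤ 2 * mid.sum} =>
      meanderRel mid p.1 q.1) p q) :
    ∀ (x y : {k : ℕ // 1 ≤ k ∧ k ≤ 2 * ((a :: mid ++ [a]) : List ℕ).sum}),
      x.1 = 2 * a + p.1 → y.1 = 2 * a + q.1 →
      Relation.EqvGen (fun p q : {k : ℕ // 1 ≤ k ∧ k ≤ 2 * ((a :: mid ++ [a]) : List ℕ).sum} =>
        meanderRel (a :: mid ++ [a]) p.1 q.1) x y := by
  have hsum := sumL a mid
  induction h with
  | rel p q hpq =>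
    intro x y hxp hyq
    refine Relation.EqvGen.rel _ _ ?_
    have hp := p.2
    have hq := q.2
    rcases hpq with hu | hl
    · refine Or.inl ?_
      rw [uL2 a mid x.1 (by omega) (by omega)]
      have e : x.1 - 2 * a = p.1 := by omega
      rw [e]
      omega
    · exact Or.inr (by omega)
  | refl p =>
    intro x y hxp hyq
    have : x = y := Subtype.ext (by omega)
    rw [this]
    exact Relation.EqvGen.refl y
  | symm p q _ ih =>
    intro x y hxp hyq
    exact Relation.EqvGen.symm _ _ (ih y x hyq hxp)
  | trans p r q _ _ ih1 ih2 =>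
    intro x y hxp hyq
    have hr := r.2
    refine Relation.EqvGen.trans _ ⟨2 * a + r.1, by omega⟩ _
      (ih1 _ _ hxp rfl) (ih2 _ _ rfl hyq)

end Main

end OuterRetract

open OuterRetract in
/-- Outer nose retraction, equal case: if α₁ = αₙ (and n ≥ 3), then
Z(α₁,α₂,…,α_{n-1},αₙ) = Z(α₂,…,α_{n-1}) + α₁. -/
theorem outer_retraction_equal (a : ℕ) (ha : 0 < a) (mid : List ℕ)
    (hpos : ∀ x ∈ mid, 0 < x) (hmid : mid ≠ []) :
    Z (a :: mid ++ [a]) = Z mid + a := by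
  classical
  have hsum := sumL a mid
  have hresp : ∀ (x y : {k : ℕ // 1 ≤ k ∧ k ≤ 2 * ((a :: mid ++ [a]) : List ℕ).sum}),
      (meanderSetoid (a :: mid ++ [a])).r x y → f a mid x = f a mid y := by
    intro x y h
    induction h with
    | rel x y h => exact f_rel a mid x y h
    | refl x => rfl
    | symm _ _ _ ih => exact ih.symm
    | trans _ _ _ _ _ ih1 ih2 => exact ih1.trans ih2
  let F : Quotient (meanderSetoid (a :: mid ++ [a])) →
      Quotient (meanderSetoid mid) ⊕ Fin a := Quotient.lift (f a mid) hresp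
  have hbij : Function.Bijective F := by
    constructor
    · -- injective
      refine Quotient.ind₂ ?_
      intro x y h
      change f a mid x = f a mid y at h
      refine Quotient.sound ?_
      by_cases hx : 2 * a < x.1 ∧ x.1 ≤ 2 * a + 2 * mid.sum
      · by_cases hy : 2 * a < y.1 ∧ y.1 ≤ 2 * a + 2 * mid.sum
        · unfold f at h
          rw [dif_pos hx, dif_pos hy] at h
          have h2 := Quotient.exact (Sum.inl.inj h)
          refine lift_B a mid _ _ h2 x y ?_ ?_
          · show x.1 = 2 * a + (x.1 - 2 * a); omega
          · show y.1 = 2 * a + (y.1 - 2 * a); omega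
        · unfold f at h; rw [dif_pos hx, dif_neg hy] at h; exact absurd h (by simp)
      · by_cases hy : 2 * a < y.1 ∧ y.1 ≤ 2 * a + 2 * mid.sum
        · unfold f at h; rw [dif_neg hx, dif_pos hy] at h; exact absurd h (by simp)
        · have hix : idx a mid.sum x.1 = idx a mid.sum y.1 := by
            unfold f at h
            rw [dif_neg hx, dif_neg hy] at h
            simp only [Sum.inr.injEq, Fin.mk.injEq] at h
            have hx2 := x.2; have hy2 := y.2
            have b1 : 1 ≤ idx a mid.sum x.1 := by unfold idx; split_ifs <;> omega
            have b2 : 1 ≤ idx a mid.sum y.1 := by unfold idx; split_ifs <;> omega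
            omega
          have hxb := x.2
          have bnd : 1 ≤ idx a mid.sum x.1 ∧
              idx a mid.sum x.1 ≤ 2 * ((a :: mid ++ [a]) : List ℕ).sum := by
            unfold idx; split_ifs <;> omega
          have c1 := conn_A a mid x hx ⟨idx a mid.sum x.1, bnd⟩ rfl
          have c2 := conn_A a mid y hy ⟨idx a mid.sum x.1, bnd⟩ hix
          exact Relation.EqvGen.trans _ _ _ c1 (Relation.EqvGen.symm _ _ c2)
    · -- surjective
      intro c
      rcases c with q | i
      · obtain ⟨p, rfl⟩ := q.exists_rep
        have hp := p.2
        refine ⟨Quotient.mk _ ⟨2 * a + p.1, by omega⟩, ?_⟩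
        show f a mid _ = _
        unfold f
        rw [dif_pos (show 2 * a < 2 * a + p.1 ∧ 2 * a + p.1 ≤ 2 * a + 2 * mid.sum by omega)]
        refine congrArg Sum.inl (congrArg _ (Subtype.ext ?_))
        show 2 * a + p.1 - 2 * a = p.1
        omega
      · have hi := i.2
        refine ⟨Quotient.mk _ ⟨i.1 + 1, by omega⟩, ?_⟩
        show f a mid _ = _
        unfold f
        rw [dif_neg (show ¬ (2 * a < i.1 + 1 ∧ i.1 + 1 ≤ 2 * a + 2 * mid.sum) by omega)]
        refine congrArg Sum.inr (Fin.ext ?_)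
        show idx a mid.sum (i.1 + 1) - 1 = i.1
        unfold idx
        split_ifs <;> omega
  have hfin1 : Finite {k : ℕ // 1 ≤ k ∧ k ≤ 2 * mid.sum} :=
    Finite.of_injective (fun x => (⟨x.1, by omega⟩ : Fin (2 * mid.sum + 1)))
      (fun x y h => Subtype.ext (by simpa using h))
  have hfin2 : Finite (Quotient (meanderSetoid mid)) := Quotient.finite _
  have : Z (a :: mid ++ [a]) = Nat.card (Quotient (meanderSetoid mid) ⊕ Fin a) :=
    Nat.card_congr (Equiv.ofBijective F hbij)
  rw [this, Nat.card_sum]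
  simp [Z, Nat.card_eq_fintype_card]
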